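/- For p > 1 and r, s ∈ (0,1), sin_p(√(rs)) ≥ √(sin_p(r) · sin_p(s)), where sin_p is the inverse of arcsin_p(x) = ∫_0^x (1-t^p)^(-1/p) dt. -/

import Mathlib

open Real Set intervalIntegral

noncomputable def Wfn (p t : ℝ) : ℝ := (1 - t ^ p) ^ (-1/p)
noncomputable def Ffn (p x : ℝ) : ℝ := ∫ t in (0:ℝ)..x, Wfn p t

lemma Wfn_pos {p t : ℝ} (hp : 1 < p) (ht : t ∈ Set.Ico (0:ℝ) 1) : 0 < Wfn p t := by
  have h1 : t ^ p < 1 := Real.rpow_lt_one ht.1 ht.2 (by linarith)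
  exact Real.rpow_pos_of_pos (by linarith) _

lemma Wfn_one_le {p t : ℝ} (hp : 1 < p) (ht : t ∈ Set.Ico (0:ℝ) 1) : 1 ≤ Wfn p t := by
  have h1 : t ^ p < 1 := Real.rpow_lt_one ht.1 ht.2 (by linarith)
  have h0 : (0:ℝ) ≤ t ^ p := Real.rpow_nonneg ht.1 _
  exact Real.one_le_rpow_of_pos_of_le_one_of_nonpos (by linarith) (by linarith)
    (le_of_lt (div_neg_of_neg_of_pos (by norm_num) (by linarith)))

lemma Wfn_contOn {p x₀ : ℝ} (hp : 1 < p) (hx0 : 0 ≤ x₀) (hx1 : x₀ < 1) :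
    ContinuousOn (Wfn p) (Set.Icc 0 x₀) := by
  have hc : Continuous fun t : ℝ => 1 - t ^ p :=
    continuous_const.sub (continuous_id.rpow_const fun x => Or.inr (by positivity))
  apply hc.continuousOn.rpow_const
  intro t ht
  have h1 : t ^ p < 1 := Real.rpow_lt_one ht.1 (lt_of_le_of_lt ht.2 hx1) (by linarith)
  exact Or.inl (by linarith)

lemma Wfn_intble {p x₀ : ℝ} (hp : 1 < p) (hx0 : 0 ≤ x₀) (hx1 : x₀ < 1) :
    IntervalIntegrable (Wfn p) MeasureTheory.volume 0 x₀ := by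
  apply ContinuousOn.intervalIntegrable
  rw [Set.uIcc_of_le hx0]
  exact Wfn_contOn hp hx0 hx1

lemma Ffn_self_le {p x : ℝ} (hp : 1 < p) (hx0 : 0 ≤ x) (hx1 : x < 1) : x ≤ Ffn p x := by
  have h := intervalIntegral.integral_mono_on hx0
    (intervalIntegrable_const (c := (1:ℝ))) (Wfn_intble hp hx0 hx1)
    (fun t ht => Wfn_one_le hp ⟨ht.1, lt_of_le_of_lt ht.2 hx1⟩)
  simpa [Ffn] using h

lemma Ffn_strictMono {p u v : ℝ} (hp : 1 < p) (hu : 0 ≤ u) (huv : u < v) (hv : v < 1) :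
    Ffn p u < Ffn p v := by
  have hiu : IntervalIntegrable (Wfn p) MeasureTheory.volume 0 u :=
    Wfn_intble hp hu (by linarith)
  have hiv : IntervalIntegrable (Wfn p) MeasureTheory.volume u v := by
    have h2 := Wfn_intble hp (by linarith : (0:ℝ) ≤ v) hv
    apply h2.mono_set
    rw [Set.uIcc_of_le (by linarith : u ≤ v), Set.uIcc_of_le (by linarith : (0:ℝ) ≤ v)]
    exact Set.Icc_subset_Icc hu le_rfl
  have hpos : 0 < ∫ t in u..v, Wfn p t := by
    apply intervalIntegral.intervalIntegral_pos_of_pos_on hiv _ huv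
    intro t ht
    exact Wfn_pos hp ⟨le_trans hu ht.1.le, lt_trans ht.2 hv⟩
  have hadd := intervalIntegral.integral_add_adjacent_intervals hiu hiv
  unfold Ffn
  rw [← hadd]
  linarith

lemma Ffn_contOn {p x₀ : ℝ} (hp : 1 < p) (hx0 : 0 ≤ x₀) (hx1 : x₀ < 1) :
    ContinuousOn (Ffn p) (Set.Icc 0 x₀) := by
  have h := intervalIntegral.continuousOn_primitive_interval
    (f := Wfn p) (μ := MeasureTheory.volume) (a := 0) (b := x₀) ?_
  · rwa [Set.uIcc_of_le hx0] at h
  · rw [Set.uIcc_of_le hx0]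
    exact (Wfn_contOn hp hx0 hx1).integrableOn_compact isCompact_Icc

lemma Wfn_sqrt_le {p x y : ℝ} (hp : 1 < p) (hx : x ∈ Set.Ico (0:ℝ) 1)
    (hy : y ∈ Set.Ico (0:ℝ) 1) :
    Wfn p (Real.sqrt (x * y)) ≤ Real.sqrt (Wfn p x * Wfn p y) := by
  have hp0 : (0:ℝ) < p := by linarith
  have hX0 : (0:ℝ) ≤ x ^ p := Real.rpow_nonneg hx.1 _
  have hY0 : (0:ℝ) ≤ y ^ p := Real.rpow_nonneg hy.1 _
  have hX1 : x ^ p < 1 := Real.rpow_lt_one hx.1 hx.2 hp0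
  have hY1 : y ^ p < 1 := Real.rpow_lt_one hy.1 hy.2 hp0
  have hxy0 : (0:ℝ) ≤ x * y := mul_nonneg hx.1 hy.1
  have hsp : Real.sqrt (x * y) ^ p = Real.sqrt (x ^ p * y ^ p) := by
    rw [Real.sqrt_eq_rpow, Real.sqrt_eq_rpow, ← Real.mul_rpow hx.1 hy.1,
      ← Real.rpow_mul hxy0, ← Real.rpow_mul hxy0, mul_comm (1/2:ℝ) p]
  set X := x ^ p
  set Y := y ^ p
  have hD0 : (0:ℝ) ≤ Real.sqrt (X * Y) := Real.sqrt_nonneg _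
  have hD2 : Real.sqrt (X * Y) * Real.sqrt (X * Y) = X * Y :=
    Real.mul_self_sqrt (mul_nonneg hX0 hY0)
  have hDXY : 2 * Real.sqrt (X * Y) ≤ X + Y := by
    rw [Real.sqrt_mul hX0]
    nlinarith [sq_nonneg (Real.sqrt X - Real.sqrt Y), Real.sq_sqrt hX0, Real.sq_sqrt hY0]
  have hD1 : Real.sqrt (X * Y) < 1 := by nlinarith
  have hprod0 : (0:ℝ) < (1 - X) * (1 - Y) := by nlinarith
  have hXY : (1 - X) * (1 - Y) ≤ (1 - Real.sqrt (X * Y)) ^ 2 := by nlinarith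
  have hsq : Real.sqrt ((1 - X) * (1 - Y)) ≤ 1 - Real.sqrt (X * Y) := by
    have := Real.sqrt_le_sqrt hXY
    rwa [Real.sqrt_sq (by linarith)] at this
  have hz : -1 / p ≤ 0 := le_of_lt (div_neg_of_neg_of_pos (by norm_num) hp0)
  have hmain : (1 - Real.sqrt (X * Y)) ^ (-1/p) ≤
      Real.sqrt ((1 - X) * (1 - Y)) ^ (-1/p) :=
    Real.rpow_le_rpow_of_nonpos (Real.sqrt_pos.mpr hprod0) hsq hz
  have hrhs : Real.sqrt ((1 - X) ^ (-1/p) * (1 - Y) ^ (-1/p)) =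
      Real.sqrt ((1 - X) * (1 - Y)) ^ (-1/p) := by
    rw [← Real.mul_rpow (by linarith) (by linarith), Real.sqrt_eq_rpow,
      Real.sqrt_eq_rpow, ← Real.rpow_mul hprod0.le, ← Real.rpow_mul hprod0.le, mul_comm (-1/p) (1/2:ℝ)]
  unfold Wfn
  rw [hsp, hrhs]
  exact hmain

theorem cauchy_schwarz_interval {f g : ℝ → ℝ} {c : ℝ} (hc : 0 ≤ c)
    (hf : ContinuousOn f (Set.Icc 0 c)) (hg : ContinuousOn g (Set.Icc 0 c)) :
    (∫ t in (0:ℝ)..c, f t * g t) ≤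
      Real.sqrt (∫ t in (0:ℝ)..c, f t ^ 2) * Real.sqrt (∫ t in (0:ℝ)..c, g t ^ 2) := by
  have hu : Set.uIcc (0:ℝ) c = Set.Icc 0 c := Set.uIcc_of_le hc
  have hif : IntervalIntegrable (fun t => f t ^ 2) MeasureTheory.volume 0 c := by
    apply ContinuousOn.intervalIntegrable; rw [hu]; exact (hf.pow 2)
  have hig : IntervalIntegrable (fun t => g t ^ 2) MeasureTheory.volume 0 c := by
    apply ContinuousOn.intervalIntegrable; rw [hu]; exact (hg.pow 2)
  have hifg : IntervalIntegrable (fun t => f t * g t) MeasureTheory.volume 0 c := by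
    apply ContinuousOn.intervalIntegrable; rw [hu]; exact (hf.mul hg)
  set A := ∫ t in (0:ℝ)..c, f t ^ 2 with hA
  set B := ∫ t in (0:ℝ)..c, f t * g t with hB
  set C := ∫ t in (0:ℝ)..c, g t ^ 2 with hC
  have hA0 : 0 ≤ A := intervalIntegral.integral_nonneg hc fun s _ => sq_nonneg _
  have hC0 : 0 ≤ C := intervalIntegral.integral_nonneg hc fun s _ => sq_nonneg _
  have hquad : ∀ t : ℝ, 0 ≤ A * (t * t) + (2 * B) * t + C := by
    intro t
    have hnn : 0 ≤ ∫ s in (0:ℝ)..c, (t * f s + g s) ^ 2 :=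
      intervalIntegral.integral_nonneg hc fun s _ => sq_nonneg _
    have hexp : ∀ s : ℝ, (t * f s + g s) ^ 2
        = t ^ 2 * f s ^ 2 + 2 * t * (f s * g s) + g s ^ 2 := fun s => by ring
    have heq : (∫ s in (0:ℝ)..c, (t * f s + g s) ^ 2)
        = t ^ 2 * A + 2 * t * B + C := by
      rw [intervalIntegral.integral_congr (g := fun s =>
        t ^ 2 * f s ^ 2 + 2 * t * (f s * g s) + g s ^ 2) (fun s _ => hexp s)]
      rw [intervalIntegral.integral_add ((hif.const_mul _).add (hifg.const_mul _)) hig,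
        intervalIntegral.integral_add (hif.const_mul _) (hifg.const_mul _),
        intervalIntegral.integral_const_mul, intervalIntegral.integral_const_mul]
    nlinarith [hnn, heq]
  have hd := discrim_le_zero hquad
  rw [discrim] at hd
  have hB2 : B ^ 2 ≤ A * C := by nlinarith
  calc B ≤ |B| := le_abs_self B
    _ = Real.sqrt (B ^ 2) := (Real.sqrt_sq_eq_abs B).symm
    _ ≤ Real.sqrt (A * C) := Real.sqrt_le_sqrt hB2
    _ = Real.sqrt A * Real.sqrt C := Real.sqrt_mul hA0 _

lemma Ffn_key {p a b : ℝ} (hp : 1 < p) (ha : a ∈ Set.Ioo (0:ℝ) 1) (hb : b ∈ Set.Ioo (0:ℝ) 1) :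
    Ffn p (Real.sqrt (a * b)) ≤ Real.sqrt (Ffn p a * Ffn p b) := by
  have hab0 : (0:ℝ) < a * b := mul_pos ha.1 hb.1
  set c := Real.sqrt (a * b) with hcdef
  have hc0 : 0 < c := Real.sqrt_pos.mpr hab0
  have hcc : c * c = a * b := Real.mul_self_sqrt hab0.le
  have hc1 : c < 1 := by nlinarith [ha.2, hb.2, ha.1, hb.1]
  set fa : ℝ → ℝ := fun t => Real.sqrt (Wfn p (a / c * t)) with hfa
  set fb : ℝ → ℝ := fun t => Real.sqrt (Wfn p (b / c * t)) with hfb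
  have hmaps : ∀ (u : ℝ), u ∈ Set.Ioo (0:ℝ) 1 → ∀ t ∈ Set.Icc (0:ℝ) c,
      u / c * t ∈ Set.Icc 0 u := by
    intro u hu t ht
    constructor
    · exact mul_nonneg (div_nonneg hu.1.le hc0.le) ht.1
    · calc u / c * t ≤ u / c * c :=
            mul_le_mul_of_nonneg_left ht.2 (div_nonneg hu.1.le hc0.le)
        _ = u := div_mul_cancel₀ u hc0.ne'
  have hcont : ∀ (u : ℝ), u ∈ Set.Ioo (0:ℝ) 1 →
      ContinuousOn (fun t => Real.sqrt (Wfn p (u / c * t))) (Set.Icc 0 c) := by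
    intro u hu
    apply Real.continuous_sqrt.comp_continuousOn
    exact (Wfn_contOn hp hu.1.le hu.2).comp
      ((continuous_const.mul continuous_id).continuousOn) (hmaps u hu)
  have hsq : ∀ (u : ℝ), u ∈ Set.Ioo (0:ℝ) 1 →
      (∫ t in (0:ℝ)..c, Real.sqrt (Wfn p (u / c * t)) ^ 2) = c / u * Ffn p u := by
    intro u hu
    have h1 : (∫ t in (0:ℝ)..c, Real.sqrt (Wfn p (u / c * t)) ^ 2)
        = ∫ t in (0:ℝ)..c, Wfn p (u / c * t) := by
      apply intervalIntegral.integral_congr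
      intro t ht
      rw [Set.uIcc_of_le hc0.le] at ht
      have harg := hmaps u hu t ht
      exact Real.sq_sqrt (Wfn_pos hp ⟨harg.1, lt_of_le_of_lt harg.2 hu.2⟩).le
    have h2 := intervalIntegral.integral_comp_mul_left (a := (0:ℝ)) (b := c)
      (f := Wfn p) (c := u / c) (div_pos hu.1 hc0).ne'
    rw [mul_zero, div_mul_cancel₀ u hc0.ne'] at h2
    rw [h1, h2, smul_eq_mul, inv_div]
    rfl
  have hptw : ∀ t ∈ Set.Icc (0:ℝ) c, Wfn p t ≤ fa t * fb t := by
    intro t ht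
    have hxa := hmaps a ha t ht
    have hxb := hmaps b hb t ht
    have hxa' : a / c * t ∈ Set.Ico (0:ℝ) 1 := ⟨hxa.1, lt_of_le_of_lt hxa.2 ha.2⟩
    have hxb' : b / c * t ∈ Set.Ico (0:ℝ) 1 := ⟨hxb.1, lt_of_le_of_lt hxb.2 hb.2⟩
    have key := Wfn_sqrt_le hp hxa' hxb'
    have harg : a / c * t * (b / c * t) = t * t := by
      have h3 : a / c * t * (b / c * t) = a * b * (t * t) / (c * c) := by
        field_simp
      rw [h3, hcc]
      exact mul_div_cancel_left₀ _ hab0.ne'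
    rw [harg, Real.sqrt_mul_self ht.1,
      Real.sqrt_mul (Wfn_pos hp hxa').le] at key
    exact key
  have hFc : Ffn p c ≤ ∫ t in (0:ℝ)..c, fa t * fb t := by
    apply intervalIntegral.integral_mono_on hc0.le (Wfn_intble hp hc0.le hc1) _ hptw
    apply ContinuousOn.intervalIntegrable
    rw [Set.uIcc_of_le hc0.le]
    exact (hcont a ha).mul (hcont b hb)
  have hCS := cauchy_schwarz_interval hc0.le (hcont a ha) (hcont b hb)
  have hFa : 0 < Ffn p a := lt_of_lt_of_le ha.1 (Ffn_self_le hp ha.1.le ha.2)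
  have hFb : 0 < Ffn p b := lt_of_lt_of_le hb.1 (Ffn_self_le hp hb.1.le hb.2)
  rw [hsq a ha, hsq b hb] at hCS
  have hfin : Real.sqrt (c / a * Ffn p a) * Real.sqrt (c / b * Ffn p b)
      = Real.sqrt (Ffn p a * Ffn p b) := by
    rw [← Real.sqrt_mul (mul_nonneg (div_nonneg hc0.le ha.1.le) hFa.le)]
    congr 1
    have h4 : c / a * Ffn p a * (c / b * Ffn p b)
        = c * c / (a * b) * (Ffn p a * Ffn p b) := by ring
    rw [h4, hcc, div_self hab0.ne', one_mul]
  rw [hfin] at hCS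
  exact le_trans hFc hCS

theorem sin_p_sqrt_ineq (p : ℝ) (hp : 1 < p) (S : ℝ → ℝ)
    (hS : ∀ x ∈ Set.Icc (0:ℝ) 1,
      S (∫ t in (0:ℝ)..x, (1 - t ^ p) ^ (-1/p)) = x) :
    ∀ r ∈ Set.Ioo (0:ℝ) 1, ∀ s ∈ Set.Ioo (0:ℝ) 1,
      S (Real.sqrt (r * s)) ≥ Real.sqrt (S r * S s) := by
  have hS' : ∀ x ∈ Set.Icc (0:ℝ) 1, S (Ffn p x) = x := hS
  have hF0 : Ffn p 0 = 0 := intervalIntegral.integral_same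
  have hiv : ∀ u ∈ Set.Ioo (0:ℝ) 1, ∃ x ∈ Set.Ioo (0:ℝ) 1, Ffn p x = u := by
    intro u hu
    set x₀ : ℝ := (u + 1) / 2 with hx₀def
    have hx₀0 : (0:ℝ) ≤ x₀ := by have := hu.1; positivity
    have hx₀1 : x₀ < 1 := by have := hu.2; simp only [hx₀def]; linarith
    have hux₀ : u < x₀ := by simp only [hx₀def]; linarith [hu.2]
    have hsub := intermediate_value_Icc hx₀0 (Ffn_contOn hp hx₀0 hx₀1)
    have hmem : u ∈ Set.Icc (Ffn p 0) (Ffn p x₀) := by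
      refine ⟨by rw [hF0]; exact hu.1.le, ?_⟩
      exact le_trans hux₀.le (Ffn_self_le hp hx₀0 hx₀1)
    obtain ⟨x, hxI, hxF⟩ := hsub hmem
    refine ⟨x, ⟨?_, lt_of_le_of_lt hxI.2 hx₀1⟩, hxF⟩
    rcases eq_or_lt_of_le hxI.1 with h | h
    · exfalso; rw [← h, hF0] at hxF; exact hu.1.ne' hxF.symm
    · exact h
  intro r hr s hs
  obtain ⟨a, ha, haF⟩ := hiv r hr
  obtain ⟨b, hb, hbF⟩ := hiv s hs
  have hrs : r * s ∈ Set.Ioo (0:ℝ) 1 := ⟨mul_pos hr.1 hs.1, by nlinarith [hr.2, hs.2, hr.1, hs.1]⟩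
  have hsqrs : Real.sqrt (r * s) ∈ Set.Ioo (0:ℝ) 1 := by
    constructor
    · exact Real.sqrt_pos.mpr hrs.1
    · nlinarith [Real.mul_self_sqrt hrs.1.le, Real.sqrt_nonneg (r * s), hrs.2]
  obtain ⟨cc, hcc, hccF⟩ := hiv _ hsqrs
  have h1 : S r = a := by rw [← haF]; exact hS' a ⟨ha.1.le, ha.2.le⟩
  have h2 : S s = b := by rw [← hbF]; exact hS' b ⟨hb.1.le, hb.2.le⟩
  have h3 : S (Real.sqrt (r * s)) = cc := by
    rw [← hccF]; exact hS' cc ⟨hcc.1.le, hcc.2.le⟩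
  rw [h1, h2, h3, ge_iff_le]
  have hkey := Ffn_key hp ha hb
  rw [haF, hbF, ← hccF] at hkey
  by_contra hlt
  push_neg at hlt
  have hab1 : Real.sqrt (a * b) < 1 := by
    nlinarith [Real.mul_self_sqrt (mul_nonneg ha.1.le hb.1.le),
      Real.sqrt_nonneg (a * b), ha.2, hb.2, ha.1, hb.1]
  exact absurd hkey (not_le.mpr (Ffn_strictMono hp hcc.1.le hlt hab1))
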